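/- Laplace-method leading asymptotics: if f : ℝ → ℝ is C², has a strict global maximum at 0 with f'(0)=0, f''(0) < 0, and exp(f) is integrable, then ∫ exp(q f(x)) dx ~ exp(q f(0)) √(2π/(q|f''(0)|)) as q → ∞, i.e., the ratio tends to 1. -/

import Mathlib

open MeasureTheory Real Filter Topology

-- second-order limit via L'Hôpital
lemma lim2 (g : ℝ → ℝ) (hg : ContDiff ℝ 2 g) (hg0 : g 0 = 0) (hd1 : deriv g 0 = 0) :
    Tendsto (fun x => g x / x ^ 2) (𝓝[≠] (0:ℝ)) (𝓝 (deriv (deriv g) 0 / 2)) := by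
  have hdg : Differentiable ℝ g := hg.differentiable (by norm_num)
  have hg' : ContDiff ℝ 1 (deriv g) := by
    have := (contDiff_succ_iff_deriv (n := 1)).mp (by exact_mod_cast hg)
    exact this.2.2
  have hdg' : Differentiable ℝ (deriv g) := hg'.differentiable (by norm_num)
  have hslope : Tendsto (fun x => deriv g x / x) (𝓝[≠] (0:ℝ)) (𝓝 (deriv (deriv g) 0)) := by
    have h := (hdg' 0).hasDerivAt
    rw [hasDerivAt_iff_tendsto_slope] at h
    refine h.congr (fun x => ?_)
    simp [slope_def_field, hd1]
  have hdiv : Tendsto (fun x => deriv g x / deriv (fun y : ℝ => y ^ 2) x) (𝓝[≠] (0:ℝ))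
      (𝓝 (deriv (deriv g) 0 / 2)) := by
    have : (fun x : ℝ => deriv g x / deriv (fun y : ℝ => y ^ 2) x)
        = fun x => deriv g x / x / 2 := by
      funext x
      rw [deriv_pow_field 2]
      ring_nf
    rw [this]
    exact hslope.div_const 2
  refine deriv.lhopital_zero_nhdsNE ?_ ?_ ?_ ?_ hdiv
  · exact Eventually.of_forall fun x => hdg x
  · filter_upwards [self_mem_nhdsWithin] with x hx
    rw [deriv_pow_field 2]
    simpa using sub_ne_zero.mpr hx
  · have := (hdg.continuous.tendsto 0)
    rw [hg0] at this
    exact this.mono_left nhdsWithin_le_nhds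
  · have : Tendsto (fun x : ℝ => x ^ 2) (𝓝 0) (𝓝 (0^2)) := (continuous_pow 2).tendsto 0
    simpa using this.mono_left nhdsWithin_le_nhds

lemma core (g : ℝ → ℝ) (hg : ContDiff ℝ 2 g) (hg0 : g 0 = 0)
    (hle : ∀ x : ℝ, g x ≤ 0)
    (hsup : ∀ δ > (0:ℝ), ∃ ε > (0:ℝ), ∀ x : ℝ, δ ≤ |x| → g x ≤ -ε)
    (hd1 : deriv g 0 = 0) (A : ℝ) (hA : 0 < A) (hd2 : deriv (deriv g) 0 = -A)
    (hint : Integrable (fun x => Real.exp (g x))) :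
    Tendsto (fun q : ℝ => Real.sqrt (q * A / (2 * π)) * ∫ x : ℝ, Real.exp (q * g x))
      atTop (𝓝 1) := by
  have hL : Tendsto (fun x => g x / x ^ 2) (𝓝[≠] (0:ℝ)) (𝓝 (-A / 2)) := by
    have := lim2 g hg hg0 hd1
    rwa [hd2] at this
  -- Step B : local quadratic upper bound
  obtain ⟨δ, hδ, hδb⟩ : ∃ δ > (0:ℝ), ∀ x : ℝ, |x| ≤ δ → g x ≤ -(A/4) * x ^ 2 := by
    have hlt : ∀ᶠ x in 𝓝[≠] (0:ℝ), g x / x ^ 2 < -(A/4) := by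
      apply hL.eventually_lt_const
      linarith
    rw [eventually_nhdsWithin_iff, Metric.eventually_nhds_iff] at hlt
    obtain ⟨ε, hε, h⟩ := hlt
    refine ⟨ε/2, by linarith, fun x hx => ?_⟩
    rcases eq_or_ne x 0 with rfl | hx0
    · simp [hg0]
    · have hxe : dist x 0 < ε := by
        rw [Real.dist_eq, sub_zero]; linarith
      have := h hxe hx0
      have hx2 : (0:ℝ) < x ^ 2 := by positivity
      calc g x = g x / x ^ 2 * x ^ 2 := by field_simp
        _ ≤ -(A/4) * x ^ 2 := by nlinarith
  obtain ⟨ε, hε, htail⟩ := hsup δ hδ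
  -- Step C : pointwise limit
  have hpt : ∀ y : ℝ, Tendsto (fun q : ℝ => Real.exp (q * g (y / Real.sqrt q))) atTop
      (𝓝 (Real.exp (-A / 2 * y ^ 2))) := by
    intro y
    rcases eq_or_ne y 0 with rfl | hy
    · simp [hg0]
    · have h1 : Tendsto (fun q : ℝ => y / Real.sqrt q) atTop (𝓝[≠] 0) := by
        rw [tendsto_nhdsWithin_iff]
        constructor
        · refine Tendsto.div_atTop tendsto_const_nhds ?_
          have := tendsto_rpow_atTop (y := (1/2:ℝ)) (by norm_num)
          refine this.congr' ?_
          filter_upwards [eventually_ge_atTop (0:ℝ)] with q hq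
          exact (Real.sqrt_eq_rpow q).symm
        · filter_upwards [eventually_gt_atTop (0:ℝ)] with q hq
          exact Set.mem_compl_singleton_iff.mpr
            (div_ne_zero hy (Real.sqrt_ne_zero'.mpr hq))
      have h3 := (hL.comp h1).mul_const (y ^ 2)
      have h4 : Tendsto (fun q : ℝ => q * g (y / Real.sqrt q)) atTop (𝓝 (-A / 2 * y ^ 2)) := by
        refine h3.congr' ?_
        filter_upwards [eventually_gt_atTop (0:ℝ)] with q hq
        have hsq : Real.sqrt q ^ 2 = q := Real.sq_sqrt hq.le
        have hsqne : Real.sqrt q ≠ 0 := Real.sqrt_ne_zero'.mpr hq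
        have : (y / Real.sqrt q) ^ 2 = y ^ 2 / q := by
          rw [div_pow, hsq]
        simp only [Function.comp]
        rw [this]
        field_simp
      exact (Real.continuous_exp.tendsto _).comp h4
  -- the set and indicator functions
  set s : Set ℝ := {x : ℝ | |x| ≤ δ} with hs_def
  have hs : MeasurableSet s := (isClosed_le (by continuity) continuous_const).measurableSet
  have hcont : ∀ q : ℝ, Continuous fun x => Real.exp (q * g x) := fun q =>
    Real.continuous_exp.comp (continuous_const.mul hg.continuous)
  -- DCT
  have hDCT : Tendsto
      (fun q : ℝ => ∫ y : ℝ, s.indicator (fun x => Real.exp (q * g x)) (y / Real.sqrt q))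
      atTop (𝓝 (∫ y : ℝ, Real.exp (-A / 2 * y ^ 2))) := by
    apply tendsto_integral_filter_of_dominated_convergence
      (bound := fun y : ℝ => Real.exp (-(A/4) * y ^ 2))
    · filter_upwards with q
      exact ((((hcont q).measurable).indicator hs).comp
        (measurable_id.div_const (Real.sqrt q))).aestronglyMeasurable
    · filter_upwards [eventually_ge_atTop (1:ℝ)] with q hq
      refine Eventually.of_forall fun y => ?_
      have hq0 : (0:ℝ) < q := by linarith
      by_cases hmem : y / Real.sqrt q ∈ s
      · rw [Set.indicator_of_mem hmem]
        rw [Real.norm_eq_abs, Real.abs_exp, Real.exp_le_exp]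
        have hb := hδb _ hmem
        have hsq : (y / Real.sqrt q) ^ 2 = y ^ 2 / q := by
          rw [div_pow, Real.sq_sqrt hq0.le]
        rw [hsq] at hb
        calc q * g (y / Real.sqrt q) ≤ q * (-(A/4) * (y ^ 2 / q)) := by
              exact mul_le_mul_of_nonneg_left hb hq0.le
          _ = -(A/4) * y ^ 2 := by field_simp
      · rw [Set.indicator_of_notMem hmem]
        simp [Real.exp_nonneg]
    · exact integrable_exp_neg_mul_sq (by positivity)
    · refine Eventually.of_forall fun y => ?_
      refine (hpt y).congr' ?_
      filter_upwards [eventually_ge_atTop ((|y|/δ) ^ 2), eventually_gt_atTop (0:ℝ)]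
        with q h1 h2
      have hsqpos : 0 < Real.sqrt q := Real.sqrt_pos.mpr h2
      have hmem : y / Real.sqrt q ∈ s := by
        have h5 : |y| / δ ≤ Real.sqrt q := by
          have := Real.sqrt_le_sqrt h1
          rwa [Real.sqrt_sq (by positivity)] at this
        have : |y / Real.sqrt q| = |y| / Real.sqrt q := by
          rw [abs_div, abs_of_nonneg (Real.sqrt_nonneg q)]
        rw [hs_def, Set.mem_setOf_eq, this, div_le_iff₀ hsqpos]
        calc |y| = δ * (|y| / δ) := by field_simp
          _ ≤ δ * Real.sqrt q := by
            exact mul_le_mul_of_nonneg_left h5 hδ.le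
      rw [Set.indicator_of_mem hmem]
  -- integrability of exp (q * g x) for q ≥ 1
  have hints_q : ∀ q : ℝ, 1 ≤ q → Integrable (fun x => Real.exp (q * g x)) := by
    intro q hq
    refine hint.mono' ((hcont q).aestronglyMeasurable) ?_
    refine Eventually.of_forall fun x => ?_
    rw [Real.norm_eq_abs, Real.abs_exp, Real.exp_le_exp]
    nlinarith [hle x]
  -- tail tends to 0
  set C : ℝ := ∫ x : ℝ, Real.exp (g x) with hC_def
  have htail0 : Tendsto (fun q : ℝ => Real.sqrt q * ∫ x in sᶜ, Real.exp (q * g x))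
      atTop (𝓝 0) := by
    have hub : Tendsto (fun q : ℝ => Real.exp ε * C * (q ^ (1/2:ℝ) * Real.exp (-ε * q)))
        atTop (𝓝 0) := by
      have := (tendsto_rpow_mul_exp_neg_mul_atTop_nhds_zero (1/2) ε hε).const_mul
        (Real.exp ε * C)
      simpa using this
    refine tendsto_of_tendsto_of_tendsto_of_le_of_le' tendsto_const_nhds hub ?_ ?_
    · filter_upwards [eventually_ge_atTop (1:ℝ)] with q hq
      have h1 : (0:ℝ) ≤ ∫ x in sᶜ, Real.exp (q * g x) :=
        setIntegral_nonneg hs.compl fun x _ => (Real.exp_pos _).le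
      positivity
    · filter_upwards [eventually_ge_atTop (1:ℝ)] with q hq
      have hq0 : (0:ℝ) < q := by linarith
      have hb1 : (∫ x in sᶜ, Real.exp (q * g x))
          ≤ ∫ x in sᶜ, Real.exp (-(q-1) * ε) * Real.exp (g x) := by
        refine setIntegral_mono_on ((hints_q q hq).integrableOn)
          ((hint.integrableOn).const_mul _) hs.compl ?_
        intro x hx
        rw [← Real.exp_add, Real.exp_le_exp]
        have hxs : δ ≤ |x| := by
          have := hx
          simp only [hs_def, Set.mem_compl_iff, Set.mem_setOf_eq, not_le] at this
          linarith
        have hgx := htail x hxs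
        nlinarith
      have hb2 : (∫ x in sᶜ, Real.exp (-(q-1) * ε) * Real.exp (g x))
          ≤ Real.exp (-(q-1) * ε) * C := by
        rw [integral_const_mul]
        refine mul_le_mul_of_nonneg_left ?_ (Real.exp_pos _).le
        exact setIntegral_le_integral hint (Eventually.of_forall fun x => (Real.exp_pos _).le)
      have hsqrt : Real.sqrt q = q ^ (1/2:ℝ) := Real.sqrt_eq_rpow q
      calc Real.sqrt q * ∫ x in sᶜ, Real.exp (q * g x)
          ≤ Real.sqrt q * (Real.exp (-(q-1) * ε) * C) := by
            refine mul_le_mul_of_nonneg_left (le_trans hb1 hb2) (Real.sqrt_nonneg q)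
        _ = Real.exp ε * C * (q ^ (1/2:ℝ) * Real.exp (-ε * q)) := by
            rw [hsqrt, show -(q-1)*ε = ε + -ε*q by ring, Real.exp_add]
            ring
  -- gaussian value
  have hgauss : (∫ y : ℝ, Real.exp (-A / 2 * y ^ 2)) = Real.sqrt (π / (A/2)) := by
    have h := integral_gaussian (A/2)
    rw [← h]
    congr 1
    funext y
    rw [neg_div]
  -- assemble
  have hmain : Tendsto (fun q : ℝ => Real.sqrt (A / (2*π)) *
      ((∫ y : ℝ, s.indicator (fun x => Real.exp (q * g x)) (y / Real.sqrt q))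
        + Real.sqrt q * ∫ x in sᶜ, Real.exp (q * g x))) atTop (𝓝 1) := by
    have := (hDCT.add htail0).const_mul (Real.sqrt (A / (2*π)))
    rw [add_zero, hgauss, ← Real.sqrt_mul (by positivity)] at this
    have harg : A / (2*π) * (π / (A/2)) = 1 := by
      field_simp
    rwa [harg, Real.sqrt_one] at this
  refine hmain.congr' ?_
  filter_upwards [eventually_ge_atTop (1:ℝ)] with q hq
  have hq0 : (0:ℝ) < q := by linarith
  have hsub : (∫ y : ℝ, s.indicator (fun x => Real.exp (q * g x)) (y / Real.sqrt q))
      = Real.sqrt q * ∫ x in s, Real.exp (q * g x) := by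
    rw [MeasureTheory.Measure.integral_comp_div (s.indicator fun x => Real.exp (q * g x)) (Real.sqrt q),
      integral_indicator hs, abs_of_nonneg (Real.sqrt_nonneg q), smul_eq_mul]
  rw [hsub]
  have hsplit : (∫ x : ℝ, Real.exp (q * g x))
      = (∫ x in s, Real.exp (q * g x)) + ∫ x in sᶜ, Real.exp (q * g x) :=
    (integral_add_compl hs (hints_q q hq)).symm
  have hsqrtmul : Real.sqrt (q * A / (2*π)) = Real.sqrt (A / (2*π)) * Real.sqrt q := by
    rw [mul_comm (Real.sqrt (A / (2*π))), ← Real.sqrt_mul hq0.le]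
    congr 1
    ring
  rw [hsplit, hsqrtmul]
  ring

theorem laplace_method_leading (f : ℝ → ℝ) (hf : ContDiff ℝ 2 f)
    (hmax : ∀ x : ℝ, x ≠ 0 → f x < f 0)
    (hsup : ∀ δ > (0 : ℝ), ∃ ε > (0 : ℝ), ∀ x : ℝ, δ ≤ |x| → f x ≤ f 0 - ε)
    (hd1 : deriv f 0 = 0) (hd2 : deriv (deriv f) 0 < 0)
    (hint : Integrable (fun x => Real.exp (f x))) :
    Tendsto
      (fun q : ℝ =>
        (∫ x : ℝ, Real.exp (q * f x)) /
          (Real.exp (q * f 0) * Real.sqrt (2 * Real.pi / (q * |deriv (deriv f) 0|))))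
      atTop (𝓝 1) := by
  set A := |deriv (deriv f) 0| with hA_def
  have hA : 0 < A := abs_pos.mpr (ne_of_lt hd2)
  have hAeq : A = -(deriv (deriv f) 0) := abs_of_neg hd2
  set g : ℝ → ℝ := fun x => f x - f 0 with hg_def
  have hgC : ContDiff ℝ 2 g := hf.sub contDiff_const
  have hderiv : deriv g = deriv f := by
    funext x
    exact deriv_sub_const (f 0)
  have hle : ∀ x : ℝ, g x ≤ 0 := by
    intro x
    rcases eq_or_ne x 0 with rfl | hx
    · simp [hg_def]
    · exact sub_nonpos.mpr (hmax x hx).le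
  have hsup' : ∀ δ > (0:ℝ), ∃ ε > (0:ℝ), ∀ x : ℝ, δ ≤ |x| → g x ≤ -ε := by
    intro δ hδ
    obtain ⟨ε, hε, h⟩ := hsup δ hδ
    exact ⟨ε, hε, fun x hx => by have := h x hx; simp only [hg_def]; linarith⟩
  have hd1' : deriv g 0 = 0 := by rw [hderiv]; exact hd1
  have hd2' : deriv (deriv g) 0 = -A := by rw [hderiv, hAeq, neg_neg]
  have hint' : Integrable (fun x => Real.exp (g x)) := by
    refine (hint.div_const (Real.exp (f 0))).congr ?_
    exact Eventually.of_forall fun x => (Real.exp_sub _ _).symm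
  have hcore := core g hgC (by simp [hg_def]) hle hsup' hd1' A hA hd2' hint'
  refine hcore.congr' ?_
  filter_upwards [eventually_gt_atTop (0:ℝ)] with q hq
  have h1 : (fun x => Real.exp (q * f x))
      = fun x => Real.exp (q * f 0) * Real.exp (q * g x) := by
    funext x
    rw [← Real.exp_add]
    congr 1
    simp only [hg_def]
    ring
  have hE : Real.exp (q * f 0) ≠ 0 := (Real.exp_pos _).ne'
  have hsinv : Real.sqrt (2 * π / (q * A)) = (Real.sqrt (q * A / (2 * π)))⁻¹ := by
    rw [← Real.sqrt_inv]
    congr 1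
    rw [inv_div]
  rw [h1, integral_const_mul, hsinv, mul_div_assoc, mul_div_mul_left _ _ hE]
  rw [show ((∫ (a : ℝ), rexp (q * g a)) / (Real.sqrt (q * (A / (2 * π))))⁻¹)
      = (∫ (a : ℝ), rexp (q * g a)) * Real.sqrt (q * (A / (2 * π))) by
    rw [div_eq_mul_inv, inv_inv]]
  rw [mul_comm]
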